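/- Let Γ be a finite simplicial graph which is a join, i.e., its vertex set can be partitioned into two nonempty sets V₁ and V₂ such that every vertex of V₁ is adjacent to every vertex of V₂. Then the right-angled Coxeter group G_Γ contains no infinite proper malnormal subgroup. -/

import Mathlib

open scoped Pointwise ENNReal

namespace RACGPaper

/-- The defining relations of the right-angled Coxeter group of a simple graph. -/
def racgRels {V : Type*} (Γ : SimpleGraph V) : Set (FreeGroup V) :=
  {r | (∃ v : V, r = FreeGroup.of v * FreeGroup.of v) ∨
       (∃ v w : V, Γ.Adj v w ∧ r = (FreeGroup.of v * FreeGroup.of w) ^ 2)}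

/-- The right-angled Coxeter group of a simple graph. -/
def RACG {V : Type*} (Γ : SimpleGraph V) : Type _ := PresentedGroup (racgRels Γ)

instance {V : Type*} (Γ : SimpleGraph V) : Group (RACG Γ) :=
  inferInstanceAs (Group (PresentedGroup (racgRels Γ)))

/-- The generator of `RACG Γ` corresponding to a vertex. -/
def gen {V : Type*} (Γ : SimpleGraph V) (v : V) : RACG Γ := PresentedGroup.of v

/-- Word length with respect to the vertex generators (which are involutions). -/
noncomputable def len {V : Type*} (Γ : SimpleGraph V) (g : RACG Γ) : ℕ :=
  sInf {n | ∃ l : List V, l.length = n ∧ (l.map (gen Γ)).prod = g}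

/-- The word metric on `RACG Γ`. -/
noncomputable def wdist {V : Type*} (Γ : SimpleGraph V) (g h : RACG Γ) : ℕ :=
  len Γ (g⁻¹ * h)

/-- Distance from a point to a subgroup. -/
noncomputable def distH {V : Type*} (Γ : SimpleGraph V) (H : Subgroup (RACG Γ))
    (x : RACG Γ) : ℕ :=
  sInf {n | ∃ h ∈ H, wdist Γ x h = n}

/-- A `(K, C)`-quasi-geodesic defined on the integer interval `[a, b]`. -/
def IsQuasiGeodesic {V : Type*} (Γ : SimpleGraph V) (K C : ℝ) (a b : ℤ)
    (γ : ℤ → RACG Γ) : Prop :=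
  ∀ i ∈ Set.Icc a b, ∀ j ∈ Set.Icc a b,
    |(i : ℝ) - (j : ℝ)| / K - C ≤ (wdist Γ (γ i) (γ j) : ℝ) ∧
    (wdist Γ (γ i) (γ j) : ℝ) ≤ K * |(i : ℝ) - (j : ℝ)| + C

/-- A subgroup is strongly quasiconvex if every quasi-geodesic with endpoints on it
stays uniformly close to it. -/
def StronglyQuasiconvex {V : Type*} (Γ : SimpleGraph V) (H : Subgroup (RACG Γ)) : Prop :=
  ∀ K C : ℝ, 1 ≤ K → 0 ≤ C → ∃ M : ℝ, 0 ≤ M ∧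
    ∀ (a b : ℤ) (γ : ℤ → RACG Γ), IsQuasiGeodesic Γ K C a b γ →
      γ a ∈ H → γ b ∈ H → ∀ i ∈ Set.Icc a b, (distH Γ H (γ i) : ℝ) ≤ M

/-- `H` is malnormal: `gHg⁻¹ ∩ H = {1}` for every `g ∉ H`. -/
def Malnormal {G : Type*} [Group G] (H : Subgroup G) : Prop :=
  ∀ g : G, g ∉ H → ∀ x : G, x ∈ H → g⁻¹ * x * g ∈ H → x = 1

/-- `H` is almost malnormal: `gHg⁻¹ ∩ H` is finite for every `g ∉ H`. -/
def AlmostMalnormal {G : Type*} [Group G] (H : Subgroup G) : Prop :=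
  ∀ g : G, g ∉ H → {x : G | x ∈ H ∧ g⁻¹ * x * g ∈ H}.Finite

/-- An almost malnormal collection of subgroups. -/
def AlmostMalnormalColl {G : Type*} [Group G] (𝓗 : Set (Subgroup G)) : Prop :=
  ∀ H ∈ 𝓗, ∀ H' ∈ 𝓗, ∀ g : G,
    {x : G | x ∈ H ∧ g⁻¹ * x * g ∈ (H' : Subgroup G)}.Infinite → H = H' ∧ g ∈ H

/-- A group is virtually free if it has a free subgroup of finite index. -/
def VirtuallyFree (G : Type*) [Group G] : Prop :=
  ∃ F : Subgroup G, F.FiniteIndex ∧ IsFreeGroup F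

/-- A set of vertices spans a join subgraph. -/
def IsJoin {V : Type*} (Γ : SimpleGraph V) (J : Set V) : Prop :=
  ∃ V₁ V₂ : Set V, V₁.Nonempty ∧ V₂.Nonempty ∧ Disjoint V₁ V₂ ∧ V₁ ∪ V₂ = J ∧
    ∀ v ∈ V₁, ∀ w ∈ V₂, Γ.Adj v w

/-- The special subgroup generated by a set of vertices. -/
def special {V : Type*} (Γ : SimpleGraph V) (S₁ : Set V) : Subgroup (RACG Γ) :=
  Subgroup.closure (gen Γ '' S₁)

/-- The conjugate subgroup `gHg⁻¹`. -/
def conjSubgroup {G : Type*} [Group G] (g : G) (H : Subgroup G) : Subgroup G :=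
  H.map (MulAut.conj g).toMonoidHom

/-- `x` lies in some join subgroup of `RACG Γ`. -/
def InJoinSubgroup {V : Type*} (Γ : SimpleGraph V) (x : RACG Γ) : Prop :=
  ∃ J : Set V, IsJoin Γ J ∧ x ∈ special Γ J

/-- An infinite subgroup is join-free if none of its infinite-order elements is
conjugate into a join subgroup. -/
def JoinFree {V : Type*} (Γ : SimpleGraph V) (H : Subgroup (RACG Γ)) : Prop :=
  (H : Set (RACG Γ)).Infinite ∧
    ∀ h ∈ H, ¬ IsOfFinOrder h → ∀ g : RACG Γ, ¬ InJoinSubgroup Γ (g * h * g⁻¹)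

/-- The star of a vertex: the vertex together with its neighbours. -/
def starSet {V : Type*} (Γ : SimpleGraph V) (v : V) : Set V :=
  {v} ∪ {w | Γ.Adj v w}

/-- `x` lies in some star subgroup of `RACG Γ`. -/
def InStarSubgroup {V : Type*} (Γ : SimpleGraph V) (x : RACG Γ) : Prop :=
  ∃ v : V, x ∈ special Γ (starSet Γ v)

/-- An infinite subgroup is star-free if none of its infinite-order elements is
conjugate into a star subgroup. -/
def StarFree {V : Type*} (Γ : SimpleGraph V) (H : Subgroup (RACG Γ)) : Prop :=
  (H : Set (RACG Γ)).Infinite ∧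
    ∀ h ∈ H, ¬ IsOfFinOrder h → ∀ g : RACG Γ, ¬ InStarSubgroup Γ (g * h * g⁻¹)

/-- Word length with respect to a (symmetrized) set `T` of group elements. -/
noncomputable def wlen {G : Type*} [Group G] (T : Set G) (g : G) : ℕ :=
  sInf {n | ∃ l : List G, (∀ x ∈ l, x ∈ T ∨ x⁻¹ ∈ T) ∧ l.length = n ∧ l.prod = g}

/-- A finitely generated subgroup of `RACG Γ` is undistorted if the inclusion is a
quasi-isometric embedding with respect to word metrics. -/
def Undistorted {V : Type*} (Γ : SimpleGraph V) (H : Subgroup (RACG Γ)) : Prop :=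
  ∃ T : Finset (RACG Γ), (T : Set (RACG Γ)) ⊆ (H : Set (RACG Γ)) ∧
    Subgroup.closure (T : Set (RACG Γ)) = H ∧
    ∃ K C : ℝ, 1 ≤ K ∧ 0 ≤ C ∧ ∀ h ∈ H,
      (wlen (T : Set (RACG Γ)) h : ℝ) / K - C ≤ (len Γ h : ℝ) ∧
      (len Γ h : ℝ) ≤ K * (wlen (T : Set (RACG Γ)) h : ℝ) + C

/-- A subgroup is stable if it is undistorted and quasi-geodesics with common
endpoints on it uniformly fellow-travel. -/
def Stable {V : Type*} (Γ : SimpleGraph V) (H : Subgroup (RACG Γ)) : Prop :=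
  Undistorted Γ H ∧ ∀ K C : ℝ, 1 ≤ K → 0 ≤ C → ∃ M : ℝ, 0 ≤ M ∧
    ∀ (a b a' b' : ℤ) (γ γ' : ℤ → RACG Γ),
      IsQuasiGeodesic Γ K C a b γ → IsQuasiGeodesic Γ K C a' b' γ' →
      γ a = γ' a' → γ b = γ' b' → γ a ∈ H → γ b ∈ H →
      (∀ i ∈ Set.Icc a b, ∃ j ∈ Set.Icc a' b', (wdist Γ (γ i) (γ' j) : ℝ) ≤ M) ∧
      (∀ j ∈ Set.Icc a' b', ∃ i ∈ Set.Icc a b, (wdist Γ (γ i) (γ' j) : ℝ) ≤ M)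

/-- `H` is `N`-join-busting: every join subword of a reduced word representing an
element of `H` has length at most `N`. -/
def JoinBusting {V : Type*} (Γ : SimpleGraph V) (H : Subgroup (RACG Γ)) (N : ℕ) : Prop :=
  ∀ h ∈ H, ∀ w : List V, (w.map (gen Γ)).prod = h → w.length = len Γ h →
    ∀ β : List V, β <:+: w → InJoinSubgroup Γ (β.map (gen Γ)).prod → β.length ≤ N

/-- `a b c d` is an induced four-cycle (in this cyclic order), with diagonals
`(a, c)` and `(b, d)`. -/
def IsInducedFourCycle {V : Type*} (Γ : SimpleGraph V) (a b c d : V) : Prop :=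
  a ≠ c ∧ b ≠ d ∧ ¬ Γ.Adj a c ∧ ¬ Γ.Adj b d ∧
    Γ.Adj a b ∧ Γ.Adj b c ∧ Γ.Adj c d ∧ Γ.Adj d a

/-- A set of vertices is the vertex set of an induced four-cycle. -/
def IsFourCycleSet {V : Type*} (Γ : SimpleGraph V) (Q : Set V) : Prop :=
  ∃ a b c d : V, Q = {a, b, c, d} ∧ IsInducedFourCycle Γ a b c d

/-- The four-cycle graph `Γ⁴`: vertices are induced four-cycles of `Γ`, adjacent
when they share a pair of non-adjacent vertices. -/
def fourCycleGraph {V : Type*} (Γ : SimpleGraph V) :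
    SimpleGraph {Q : Set V // IsFourCycleSet Γ Q} :=
  SimpleGraph.fromRel (fun Q Q' => ∃ u v : V, u ≠ v ∧ ¬ Γ.Adj u v ∧
    u ∈ (Q : Set V) ∩ (Q' : Set V) ∧ v ∈ (Q : Set V) ∩ (Q' : Set V))

/-- A connected component of `Γ⁴` whose support is the whole vertex set of `Γ`. -/
def FullSupportComponent {V : Type*} (Γ : SimpleGraph V)
    (C : (fourCycleGraph Γ).ConnectedComponent) : Prop :=
  ∀ v : V, ∃ Q : {Q : Set V // IsFourCycleSet Γ Q},
    (fourCycleGraph Γ).connectedComponentMk Q = C ∧ v ∈ (Q : Set V)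

/-- `Γ` is CFS: some component of `Γ⁴` has full support. -/
def CFS {V : Type*} (Γ : SimpleGraph V) : Prop :=
  ∃ C : (fourCycleGraph Γ).ConnectedComponent, FullSupportComponent Γ C

/-- Length (number of edges) of a shortest edge path from `x` to `y` in the Cayley
graph all of whose vertices are at distance at least `c` from `H`. -/
noncomputable def avoidDist {V : Type*} (Γ : SimpleGraph V) (H : Subgroup (RACG Γ))
    (c : ℝ) (x y : RACG Γ) : ℝ≥0∞ :=
  ⨅ (l : List (RACG Γ)) (_ : l.head? = some x) (_ : l.getLast? = some y)
    (_ : l.Chain' fun a b => wdist Γ a b = 1)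
    (_ : ∀ z ∈ l, c ≤ (distH Γ H z : ℝ)), ((l.length - 1 : ℕ) : ℝ≥0∞)

/-- The subgroup divergence functions `σⁿ_ρ` of `H` in `RACG Γ`. -/
noncomputable def divFun {V : Type*} (Γ : SimpleGraph V) (H : Subgroup (RACG Γ))
    (ρ : ℝ) (n : ℕ) (r : ℝ) : ℝ≥0∞ :=
  ⨅ (x : RACG Γ) (y : RACG Γ) (_ : (distH Γ H x : ℝ) = r)
    (_ : (distH Γ H y : ℝ) = r) (_ : avoidDist Γ H r x y ≠ ⊤)
    (_ : (n : ℝ) * r ≤ (wdist Γ x y : ℝ)), avoidDist Γ H (ρ * r) x y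

/-- Domination of functions: `f(x) ≤ A g(Bx) + Cx` for large `x`. -/
def FunDom (f g : ℝ → ℝ≥0∞) : Prop :=
  ∃ A B C D : ℝ, 0 < A ∧ 0 < B ∧ 0 < C ∧ 0 < D ∧
    ∀ x : ℝ, D < x → f x ≤ ENNReal.ofReal A * g (B * x) + ENNReal.ofReal (C * x)

/-- Domination of families of divergence functions. -/
def FamDom (δ δ' : ℝ → ℕ → ℝ → ℝ≥0∞) : Prop :=
  ∃ L : ℝ, L ∈ Set.Ioc (0 : ℝ) 1 ∧ ∃ M : ℕ, 0 < M ∧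
    ∀ ρ ∈ Set.Ioc (0 : ℝ) 1, ∀ n : ℕ, 2 ≤ n → FunDom (δ (L * ρ) n) (δ' ρ (M * n))

/-- A family of divergence functions is equivalent to a single function. -/
def FamEquivFun (δ : ℝ → ℕ → ℝ → ℝ≥0∞) (f : ℝ → ℝ≥0∞) : Prop :=
  FamDom δ (fun _ _ => f) ∧ FamDom (fun _ _ => f) δ

/-- Height at most `n`: any `n+1` pairwise distinct cosets give conjugates with
finite total intersection. -/
def HeightAtMost {G : Type*} [Group G] (H : Subgroup G) (n : ℕ) : Prop :=
  ∀ f : Fin (n + 1) → G, (∀ i j, i ≠ j → (f i)⁻¹ * f j ∉ H) →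
    {x : G | ∀ i, (f i)⁻¹ * x * f i ∈ H}.Finite

/-- `H` has finite height in `G`. -/
def FiniteHeight {G : Type*} [Group G] (H : Subgroup G) : Prop :=
  ∃ n : ℕ, HeightAtMost H n

lemma racg_rel_eq_one {V : Type*} (Γ : SimpleGraph V) {r : FreeGroup V}
    (hr : r ∈ racgRels Γ) : (PresentedGroup.mk (racgRels Γ) r : RACG Γ) = 1 := by
  have : r ∈ Subgroup.normalClosure (racgRels Γ) := Subgroup.subset_normalClosure hr
  exact (QuotientGroup.eq_one_iff r).2 this

lemma gen_mul_self {V : Type*} (Γ : SimpleGraph V) (v : V) :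
    gen Γ v * gen Γ v = 1 := by
  have := racg_rel_eq_one Γ (r := FreeGroup.of v * FreeGroup.of v) (Or.inl ⟨v, rfl⟩)
  rw [map_mul] at this; exact this

lemma gen_comm {V : Type*} (Γ : SimpleGraph V) {v w : V} (h : Γ.Adj v w) :
    Commute (gen Γ v) (gen Γ w) := by
  have h2 := racg_rel_eq_one Γ (r := (FreeGroup.of v * FreeGroup.of w) ^ 2)
    (Or.inr ⟨v, w, h, rfl⟩)
  have hsq : (gen Γ v * gen Γ w) ^ 2 = 1 := by
    rw [map_pow, map_mul] at h2; exact h2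
  have hv := gen_mul_self Γ v
  have hw := gen_mul_self Γ w
  have hvinv : (gen Γ v)⁻¹ = gen Γ v := by
    rw [inv_eq_iff_mul_eq_one]; exact hv
  have hwinv : (gen Γ w)⁻¹ = gen Γ w := by
    rw [inv_eq_iff_mul_eq_one]; exact hw
  have : gen Γ v * gen Γ w = (gen Γ v * gen Γ w)⁻¹ :=
    eq_inv_of_mul_eq_one_left (by rw [← sq]; exact hsq)
  unfold Commute SemiconjBy
  rw [this, mul_inv_rev, hvinv, hwinv]

lemma gen_ne_one {V : Type*} (Γ : SimpleGraph V) (v : V) : gen Γ v ≠ 1 := by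
  have hcond : ∀ r ∈ racgRels Γ, FreeGroup.lift (fun _ : V => (-1 : ℤˣ)) r = 1 := by
    rintro r (⟨v, rfl⟩ | ⟨v, w, _, rfl⟩) <;> simp [map_mul, map_pow]
  have : PresentedGroup.toGroup hcond (gen Γ v) = -1 :=
    PresentedGroup.toGroup.of hcond
  intro h
  rw [h, show (PresentedGroup.toGroup hcond) (1 : RACG Γ) = 1 from map_one _] at this
  exact (by decide : (1 : ℤˣ) ≠ -1) this

end RACGPaper


open RACGPaper in
/-- if the defining graph is a join, the RACG has no infinite proper
malnormal subgroup. -/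
theorem join_no_infinite_proper_malnormal
    {V : Type*} [Fintype V] (Γ : SimpleGraph V)
    (hj : IsJoin Γ (Set.univ : Set V)) :
    ¬ ∃ H : Subgroup (RACG Γ),
        (H : Set (RACG Γ)).Infinite ∧ H ≠ ⊤ ∧ Malnormal H := by
  rintro ⟨H, hInf, hneTop, hmal⟩
  obtain ⟨V₁, V₂, ⟨v₁, hv₁⟩, ⟨v₂, hv₂⟩, hdisj, hunion, hadj⟩ := hj
  set A : Subgroup (RACG Γ) := Subgroup.closure (gen Γ '' V₁) with hA
  set B : Subgroup (RACG Γ) := Subgroup.closure (gen Γ '' V₂) with hB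
  -- every element of A commutes with every element of B
  have hABle : A ≤ Subgroup.centralizer (B : Set (RACG Γ)) := by
    rw [hA, Subgroup.closure_le]
    rintro _ ⟨v, hv, rfl⟩
    rw [SetLike.mem_coe, Subgroup.mem_centralizer_iff]
    intro b hb
    have hBle : B ≤ Subgroup.centralizer {gen Γ v} := by
      rw [hB, Subgroup.closure_le]
      rintro _ ⟨w, hw, rfl⟩
      rw [SetLike.mem_coe, Subgroup.mem_centralizer_iff]
      intro g hg
      rw [Set.mem_singleton_iff] at hg
      subst hg
      exact (gen_comm Γ (hadj v hv w hw)).eq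
    have := Subgroup.mem_centralizer_iff.1 (hBle hb)
    exact (this (gen Γ v) rfl).symm
  have hAB : ∀ a ∈ A, ∀ b ∈ B, Commute a b := by
    intro a ha b hb
    exact (Subgroup.mem_centralizer_iff.1 (hABle ha) b hb).symm
  -- every element of the group decomposes as a product a * b
  have hdecomp : ∀ g : RACG Γ, ∃ a ∈ A, ∃ b ∈ B, g = a * b := by
    intro g
    let S : Subgroup (RACG Γ) :=
      { carrier := {g | ∃ a ∈ A, ∃ b ∈ B, g = a * b}
        one_mem' := ⟨1, A.one_mem, 1, B.one_mem, (one_mul 1).symm⟩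
        mul_mem' := by
          rintro x y ⟨a, ha, b, hb, rfl⟩ ⟨a', ha', b', hb', rfl⟩
          refine ⟨a * a', A.mul_mem ha ha', b * b', B.mul_mem hb hb', ?_⟩
          have hc : b * a' = a' * b := ((hAB a' ha' b hb).symm).eq
          calc a * b * (a' * b') = a * (b * a') * b' := by group
            _ = a * (a' * b) * b' := by rw [hc]
            _ = a * a' * (b * b') := by group
        inv_mem' := by
          rintro x ⟨a, ha, b, hb, rfl⟩
          refine ⟨a⁻¹, A.inv_mem ha, b⁻¹, B.inv_mem hb, ?_⟩
          rw [mul_inv_rev]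
          exact ((hAB a⁻¹ (A.inv_mem ha) b⁻¹ (B.inv_mem hb)).eq).symm }
    refine PresentedGroup.generated_by (racgRels Γ) S (fun j => ?_) g
    have hj : j ∈ V₁ ∪ V₂ := by rw [hunion]; trivial
    rcases hj with hj | hj
    · exact ⟨gen Γ j, Subgroup.subset_closure ⟨j, hj, rfl⟩, 1, B.one_mem,
        (mul_one _).symm⟩
    · exact ⟨1, A.one_mem, gen Γ j, Subgroup.subset_closure ⟨j, hj, rfl⟩,
        (one_mul _).symm⟩
  -- malnormality applied to commuting elements
  have key : ∀ h ∈ H, ∀ g : RACG Γ, Commute g h → g ∉ H → h = 1 := by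
    intro h hh g hc hg
    refine hmal g hg h hh ?_
    have : g⁻¹ * h * g = h := by
      rw [(hc.inv_left).eq, mul_assoc, inv_mul_cancel, mul_one]
    rw [this]; exact hh
  have claimB : (∃ a, a ∈ A ∧ a ∈ H ∧ a ≠ 1) → ∀ b ∈ B, b ∈ H := by
    rintro ⟨a, haA, haH, hane⟩ b hbB
    by_contra hbH
    exact hane (key a haH b ((hAB a haA b hbB).symm) hbH)
  have claimA : (∃ b, b ∈ B ∧ b ∈ H ∧ b ≠ 1) → ∀ a ∈ A, a ∈ H := by
    rintro ⟨b, hbB, hbH, hbne⟩ a haA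
    by_contra haH
    exact hbne (key b hbH a (hAB a haA b hbB) haH)
  -- a nontrivial element of H
  obtain ⟨x, hxH, y, hyH, hxy⟩ := hInf.nontrivial
  have hh : x * y⁻¹ ∈ H := H.mul_mem hxH (H.inv_mem hyH)
  have hne1 : x * y⁻¹ ≠ 1 := by
    intro h; exact hxy (by rw [← mul_one x, ← inv_mul_cancel y, ← mul_assoc, h, one_mul])
  obtain ⟨a, haA, b, hbB, hab⟩ := hdecomp (x * y⁻¹)
  have haH : a ∈ H := by
    by_contra hna
    have hca : Commute a (x * y⁻¹) := by
      rw [hab]; exact (Commute.refl a).mul_right (hAB a haA b hbB)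
    exact hne1 (key (x * y⁻¹) hh a hca hna)
  have hbH : b ∈ H := by
    have := H.mul_mem (H.inv_mem haH) hh
    rw [hab, ← mul_assoc, inv_mul_cancel, one_mul] at this
    exact this
  -- both A and B are contained in H
  have hboth : (∀ a' ∈ A, a' ∈ H) ∧ (∀ b' ∈ B, b' ∈ H) := by
    by_cases ha1 : a = 1
    · have hb1 : b ≠ 1 := by
        intro h1; exact hne1 (by rw [hab, ha1, h1, one_mul])
      have hAsub := claimA ⟨b, hbB, hbH, hb1⟩
      have hg₁ : gen Γ v₁ ∈ A := Subgroup.subset_closure ⟨v₁, hv₁, rfl⟩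
      have hBsub := claimB ⟨gen Γ v₁, hg₁, hAsub _ hg₁, gen_ne_one Γ v₁⟩
      exact ⟨hAsub, hBsub⟩
    · have hBsub := claimB ⟨a, haA, haH, ha1⟩
      have hg₂ : gen Γ v₂ ∈ B := Subgroup.subset_closure ⟨v₂, hv₂, rfl⟩
      have hAsub := claimA ⟨gen Γ v₂, hg₂, hBsub _ hg₂, gen_ne_one Γ v₂⟩
      exact ⟨hAsub, hBsub⟩
  refine hneTop ?_
  rw [Subgroup.eq_top_iff']
  intro g
  obtain ⟨a', ha', b', hb', rfl⟩ := hdecomp g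
  exact H.mul_mem (hboth.1 a' ha') (hboth.2 b' hb')
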